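/- arXiv:2412.18875 — 2 statements merged into one kernel-verified Lean document; each statement's English description precedes it below -/
import Mathlib

section
/- In the two-agent opposed-preferences economy, let π = {C₁,…,C_k} be a classification with intervals listed from left to right, and let ⟨p,(x,y)⟩ be a competitive equilibrium of E(π), where x is the bundle of agent 1 and y that of agent 2. Then the markets clear (x_{C_j} + y_{C_j} = λ(C_j) for every j), and there exists an index j* ∈ {1,…,k} such that x_{C_i} = λ(C_i) and y_{C_i} = 0 for every i < j*, and y_{C_j} = λ(C_j) and x_{C_j} = 0 for every j > j*. -/
open MeasureTheory Set
open scoped ENNReal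

noncomputable section

/-- A classification `π = {C₁,…,C_k}` of `[0,1]` into intervals of positive Lebesgue
measure, listed from left to right. -/
structure OrderedClassification (k : ℕ) where
  F : Fin k → Set ℝ
  isInterval : ∀ j, (F j).OrdConnected
  posMeas : ∀ j, 0 < volume (F j)
  ordered : ∀ j j' : Fin k, j < j' → ∀ s ∈ F j, ∀ t ∈ F j', s < t
  cover : ⋃ j, F j = Set.Icc (0 : ℝ) 1

/-- Lebesgue measure of a commodity, as a real number. -/
def lvol (C : Set ℝ) : ℝ := (volume C).toReal

/-- The evaluation measure induced by a density: `ν(C) = ∫_C f dλ`. -/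
def nu (f : ℝ → ℝ) (C : Set ℝ) : ℝ := ∫ t in C, f t

/-- Linear utility of a tradable bundle for an agent with density `f`:
`V(π,x) = ∑_j (x_j/λ(C_j)) ν(C_j)`. -/
def Vlin {k : ℕ} (P : OrderedClassification k) (f : ℝ → ℝ) (x : Fin k → ℝ) : ℝ :=
  ∑ j, (x j / lvol (P.F j)) * nu f (P.F j)

/-- Competitive equilibrium of the two-agent opposed-preferences economy `E(π)`:
both agents have claim `1/2`; `x` is agent 1's bundle and `y` agent 2's. -/
def IsEqm2 {k : ℕ} (P : OrderedClassification k) (f₁ f₂ : ℝ → ℝ)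
    (p x y : Fin k → ℝ) : Prop :=
  (∀ j, 0 ≤ p j) ∧ (∀ j, 0 ≤ x j) ∧ (∀ j, 0 ≤ y j) ∧
  (∀ j, x j + y j ≤ lvol (P.F j)) ∧
  (∑ j, p j * x j ≤ (1/2) * ∑ j, p j * lvol (P.F j)) ∧
  (∑ j, p j * y j ≤ (1/2) * ∑ j, p j * lvol (P.F j)) ∧
  (∀ z : Fin k → ℝ, (∀ j, 0 ≤ z j) → Vlin P f₁ x < Vlin P f₁ z →
    (1/2) * ∑ j, p j * lvol (P.F j) < ∑ j, p j * z j) ∧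
  (∀ z : Fin k → ℝ, (∀ j, 0 ≤ z j) → Vlin P f₂ y < Vlin P f₂ z →
    (1/2) * ∑ j, p j * lvol (P.F j) < ∑ j, p j * z j)

/-- Opposed preferences: `f₁` is strictly decreasing and `f₂` strictly increasing on
`[0,1]`, both strictly positive. -/
def OpposedPreferences (f₁ f₂ : ℝ → ℝ) : Prop :=
  StrictAntiOn f₁ (Set.Icc 0 1) ∧ StrictMonoOn f₂ (Set.Icc 0 1) ∧
    (∀ t ∈ Set.Icc (0:ℝ) 1, 0 < f₁ t) ∧ (∀ t ∈ Set.Icc (0:ℝ) 1, 0 < f₂ t)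

lemma sum_apply_ite {k : ℕ} (j0 : Fin k) (G : Fin k → ℝ → ℝ) (hG : ∀ j, G j 0 = 0) (c : ℝ) :
    ∑ j, G j (if j = j0 then c else 0) = G j0 c := by
  rw [Finset.sum_eq_single j0]
  · simp
  · intro b _ hb; simp [hb, hG]
  · intro h; exact absurd (Finset.mem_univ j0) h

lemma Vlin_pert {k : ℕ} (P : OrderedClassification k) (f : ℝ → ℝ) (x : Fin k → ℝ)
    (j0 : Fin k) (c : ℝ) :
    Vlin P f (fun j => x j + if j = j0 then c else 0)
      = Vlin P f x + c / lvol (P.F j0) * nu f (P.F j0) := by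
  simp only [Vlin, add_div, add_mul, Finset.sum_add_distrib]
  congr 1
  exact sum_apply_ite j0 (fun j t => t / lvol (P.F j) * nu f (P.F j)) (by simp) c

lemma dot_pert {k : ℕ} (p x : Fin k → ℝ) (j0 : Fin k) (c : ℝ) :
    ∑ j, p j * (x j + if j = j0 then c else 0) = (∑ j, p j * x j) + p j0 * c := by
  simp only [mul_add, Finset.sum_add_distrib]
  congr 1
  exact sum_apply_ite j0 (fun j t => p j * t) (by simp) c

lemma setInt_pos {s : Set ℝ} (hs : MeasurableSet s) {g : ℝ → ℝ}
    (hint : IntegrableOn g s) (hnn : ∀ t ∈ s, 0 ≤ g t)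
    (hpos : 0 < volume {t | t ∈ s ∧ 0 < g t}) : 0 < ∫ t in s, g t := by
  have hae : 0 ≤ᵐ[volume.restrict s] g := by
    filter_upwards [ae_restrict_mem hs] with t ht using hnn t ht
  rw [setIntegral_pos_iff_support_of_nonneg_ae hae hint]
  refine lt_of_lt_of_le hpos (measure_mono ?_)
  rintro t ⟨ht, hg⟩
  exact ⟨ne_of_gt hg, ht⟩

set_option maxHeartbeats 1000000 in
/-- in any competitive equilibrium of the two-agent opposed-preferences
economy, markets clear and there is an index `j*` such that agent 1 consumes all of
every commodity to the left of `j*` and agent 2 all of every commodity to the right. -/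
theorem opposed_preferences_split (k : ℕ) (P : OrderedClassification k)
    (f₁ f₂ : ℝ → ℝ) (hopp : OpposedPreferences f₁ f₂)
    (p x y : Fin k → ℝ) (heq : IsEqm2 P f₁ f₂ p x y) :
    (∀ j, x j + y j = lvol (P.F j)) ∧
    ∃ jstar : Fin k,
      (∀ i, i < jstar → x i = lvol (P.F i) ∧ y i = 0) ∧
      (∀ j, jstar < j → y j = lvol (P.F j) ∧ x j = 0) := by
  classical
  obtain ⟨hf1anti, hf2mono, hf1pos, hf2pos⟩ := hopp
  obtain ⟨hp0, hx0, hy0, hxy, hbx, hby, hmax1, hmax2⟩ := heq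
  -- k is positive
  have hk : 0 < k := by
    rcases Nat.eq_zero_or_pos k with rfl | hk
    · exfalso
      have h0 : (0:ℝ) ∈ Icc (0:ℝ) 1 := by norm_num
      rw [← P.cover] at h0
      obtain ⟨j, -⟩ := mem_iUnion.mp h0
      exact j.elim0
    · exact hk
  -- basic geometric/measure facts
  have hsub : ∀ j, P.F j ⊆ Icc (0:ℝ) 1 := by
    intro j; rw [← P.cover]; exact subset_iUnion P.F j
  have hmeas : ∀ j, MeasurableSet (P.F j) := fun j => (P.isInterval j).measurableSet
  have hfin : ∀ j, volume (P.F j) ≠ ⊤ := by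
    intro j
    exact (lt_of_le_of_lt (measure_mono (hsub j))
      (by rw [Real.volume_Icc]; exact ENNReal.ofReal_lt_top)).ne
  have hl : ∀ j, 0 < lvol (P.F j) := fun j => ENNReal.toReal_pos (P.posMeas j).ne' (hfin j)
  have hne : ∀ j, (P.F j).Nonempty := fun j => nonempty_of_measure_ne_zero (P.posMeas j).ne'
  have hint1 : ∀ j, IntegrableOn f₁ (P.F j) :=
    fun j => (AntitoneOn.integrableOn_isCompact isCompact_Icc hf1anti.antitoneOn).mono_set (hsub j)
  have hint2 : ∀ j, IntegrableOn f₂ (P.F j) :=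
    fun j => (hf2mono.monotoneOn.integrableOn_isCompact isCompact_Icc).mono_set (hsub j)
  have hintc : ∀ (j : Fin k) (c : ℝ), IntegrableOn (fun _ => c) (P.F j) :=
    fun j c => integrableOn_const (hfin j)
  have hnupos : ∀ (f : ℝ → ℝ), (∀ t ∈ Icc (0:ℝ) 1, 0 < f t) →
      (∀ j, IntegrableOn f (P.F j)) → ∀ j, 0 < nu f (P.F j) := by
    intro f hf hint j
    refine setInt_pos (hmeas j) (hint j) (fun t ht => (hf t (hsub j ht)).le) ?_
    refine lt_of_lt_of_le (P.posMeas j) (measure_mono ?_)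
    intro t ht; exact ⟨ht, hf t (hsub j ht)⟩
  have hnu1 : ∀ j, 0 < nu f₁ (P.F j) := hnupos f₁ hf1pos hint1
  have hnu2 : ∀ j, 0 < nu f₂ (P.F j) := hnupos f₂ hf2pos hint2
  -- budgets are saturated
  have hbudget : ∀ (f : ℝ → ℝ) (w : Fin k → ℝ), (∀ j, 0 < nu f (P.F j)) → (∀ j, 0 ≤ w j) →
      (∀ z : Fin k → ℝ, (∀ j, 0 ≤ z j) → Vlin P f w < Vlin P f z →
        (1/2) * ∑ j, p j * lvol (P.F j) < ∑ j, p j * z j) →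
      ∑ j, p j * w j ≤ (1/2) * ∑ j, p j * lvol (P.F j) →
      ∑ j, p j * w j = (1/2) * ∑ j, p j * lvol (P.F j) := by
    intro f w hnuf hw hmax hble
    by_contra hne'
    have hlt : ∑ j, p j * w j < (1/2) * ∑ j, p j * lvol (P.F j) := lt_of_le_of_ne hble hne'
    obtain j0 : Fin k := ⟨0, hk⟩
    have hgpos : 0 < (1/2) * (∑ j, p j * lvol (P.F j)) - ∑ j, p j * w j := by linarith
    obtain ⟨ε, hε0, hεle⟩ : ∃ ε : ℝ, 0 < ε ∧
        (∑ j, p j * w j) + p j0 * ε ≤ (1/2) * ∑ j, p j * lvol (P.F j) := by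
      by_cases hpj : p j0 = 0
      · exact ⟨1, one_pos, by rw [hpj]; linarith⟩
      · have hpj' : 0 < p j0 := (hp0 j0).lt_of_ne (Ne.symm hpj)
        refine ⟨((1/2) * (∑ j, p j * lvol (P.F j)) - ∑ j, p j * w j) / p j0,
          div_pos hgpos hpj', ?_⟩
        rw [← mul_div_assoc, mul_div_cancel_left₀ _ hpj'.ne']
        linarith
    have hz := hmax (fun j => w j + if j = j0 then ε else 0)
      (fun j => by split
                   · linarith [hw j]
                   · simpa using hw j)
      (by rw [Vlin_pert]
          have : 0 < ε / lvol (P.F j0) * nu f (P.F j0) :=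
            mul_pos (div_pos hε0 (hl j0)) (hnuf j0)
          linarith)
    rw [dot_pert] at hz
    linarith
  have hbudx : ∑ j, p j * x j = (1/2) * ∑ j, p j * lvol (P.F j) :=
    hbudget f₁ x hnu1 hx0 hmax1 hbx
  have hbudy : ∑ j, p j * y j = (1/2) * ∑ j, p j * lvol (P.F j) :=
    hbudget f₂ y hnu2 hy0 hmax2 hby
  -- prices are positive
  have hppos : ∀ j, 0 < p j := by
    intro j
    rcases (hp0 j).lt_or_eq with h | h
    · exact h
    exfalso
    have hz := hmax1 (fun m => x m + if m = j then 1 else 0)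
      (fun m => by split
                   · linarith [hx0 m]
                   · simpa using hx0 m)
      (by rw [Vlin_pert]
          have : 0 < (1:ℝ) / lvol (P.F j) * nu f₁ (P.F j) :=
            mul_pos (div_pos one_pos (hl j)) (hnu1 j)
          linarith)
    rw [dot_pert, ← h] at hz
    rw [hbudx] at hz
    linarith
  -- market clearing
  have hclear : ∀ j, x j + y j = lvol (P.F j) := by
    have hsum : ∑ j, p j * (lvol (P.F j) - (x j + y j)) = 0 := by
      simp only [mul_sub, mul_add, Finset.sum_sub_distrib, Finset.sum_add_distrib]
      rw [hbudx, hbudy]; ring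
    intro j
    have hterm := (Finset.sum_eq_zero_iff_of_nonneg
      (fun i _ => mul_nonneg (hp0 i) (by linarith [hxy i]))).mp hsum j (Finset.mem_univ j)
    rcases mul_eq_zero.mp hterm with h | h
    · exact absurd h (hppos j).ne'
    · linarith
  -- optimality ratios
  have hratio : ∀ (f : ℝ → ℝ) (w : Fin k → ℝ), (∀ j, 0 ≤ w j) →
      ∑ j, p j * w j = (1/2) * ∑ j, p j * lvol (P.F j) →
      (∀ z : Fin k → ℝ, (∀ j, 0 ≤ z j) → Vlin P f w < Vlin P f z →
        (1/2) * ∑ j, p j * lvol (P.F j) < ∑ j, p j * z j) →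
      ∀ i j, i ≠ j → 0 < w j →
        nu f (P.F i) / lvol (P.F i) * p j ≤ nu f (P.F j) / lvol (P.F j) * p i := by
    intro f w hw hbud hmax i j hij hwj
    set ε : ℝ := w j with hεdef
    set δ : ℝ := ε * p j / p i with hδ
    have hδ0 : 0 ≤ δ := div_nonneg (mul_nonneg hwj.le (hp0 j)) (hp0 i)
    set z : Fin k → ℝ :=
      fun m => (fun m' => w m' + if m' = j then -ε else 0) m + if m = i then δ else 0 with hzdef
    have hz0 : ∀ m, 0 ≤ z m := by
      intro m
      simp only [hzdef]
      by_cases hmj : m = j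
      · subst hmj
        rw [if_pos rfl, if_neg (Ne.symm hij)]
        simp [hεdef]
      · rw [if_neg hmj]
        by_cases hmi : m = i
        · subst hmi; rw [if_pos rfl]; have := hw m; linarith
        · rw [if_neg hmi]; simpa using hw m
    have hdz : ∑ m, p m * z m = ∑ m, p m * w m := by
      simp only [hzdef]
      rw [dot_pert p (fun m' => w m' + if m' = j then -ε else 0) i δ,
        dot_pert p w j (-ε)]
      have hPδ : p i * δ = ε * p j := by
        rw [hδ, ← mul_div_assoc]
        exact mul_div_cancel_left₀ _ (hppos i).ne'
      rw [hPδ]; ring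
    have hVle : Vlin P f z ≤ Vlin P f w := by
      by_contra hVlt
      push_neg at hVlt
      have := hmax z hz0 hVlt
      rw [hdz, hbud] at this
      exact lt_irrefl _ this
    have hVz : Vlin P f z = Vlin P f w + (-ε) / lvol (P.F j) * nu f (P.F j)
        + δ / lvol (P.F i) * nu f (P.F i) := by
      simp only [hzdef]
      rw [Vlin_pert P f (fun m' => w m' + if m' = j then -ε else 0) i δ,
        Vlin_pert P f w j (-ε)]
    rw [hVz] at hVle
    have h1 : δ * (nu f (P.F i) / lvol (P.F i)) ≤ ε * (nu f (P.F j) / lvol (P.F j)) := by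
      have e1 : (-ε) / lvol (P.F j) * nu f (P.F j) = -(ε * (nu f (P.F j) / lvol (P.F j))) := by
        field_simp
      have e2 : δ / lvol (P.F i) * nu f (P.F i) = δ * (nu f (P.F i) / lvol (P.F i)) := by
        field_simp
      rw [e1, e2] at hVle
      linarith
    have hPδ : p i * δ = ε * p j := by
      rw [hδ, ← mul_div_assoc]
      exact mul_div_cancel_left₀ _ (hppos i).ne'
    have h4 := mul_le_mul_of_nonneg_right h1 (hp0 i)
    have e3 : δ * (nu f (P.F i) / lvol (P.F i)) * p i
        = ε * (nu f (P.F i) / lvol (P.F i) * p j) := by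
      linear_combination (nu f (P.F i) / lvol (P.F i)) * hPδ
    have h2 : ε * (nu f (P.F i) / lvol (P.F i) * p j)
        ≤ ε * (nu f (P.F j) / lvol (P.F j) * p i) := by linarith
    exact le_of_mul_le_mul_left h2 hwj
  -- average monotonicity for f₁ (strictly decreasing averages)
  have havg1 : ∀ i j : Fin k, i < j →
      nu f₁ (P.F j) / lvol (P.F j) < nu f₁ (P.F i) / lvol (P.F i) := by
    intro i j hij
    obtain ⟨s0, hs0⟩ := hne i
    set c : ℝ := sSup (P.F i) with hc
    have hbdd : BddAbove (P.F i) := ⟨1, fun t ht => (hsub i ht).2⟩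
    have hcmem : c ∈ Icc (0:ℝ) 1 :=
      ⟨le_trans (hsub i hs0).1 (le_csSup hbdd hs0),
       csSup_le ⟨s0, hs0⟩ (fun t ht => (hsub i ht).2)⟩
    have hcle : ∀ t ∈ P.F j, c ≤ t := fun t ht =>
      csSup_le ⟨s0, hs0⟩ (fun s hs => (P.ordered i j hij s hs t ht).le)
    have h1 : f₁ c * lvol (P.F i) ≤ nu f₁ (P.F i) := by
      have hge : ∀ s ∈ P.F i, f₁ c ≤ f₁ s := fun s hs =>
        hf1anti.antitoneOn (hsub i hs) hcmem (le_csSup hbdd hs)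
      have := setIntegral_mono_on (hintc i (f₁ c)) (hint1 i) (hmeas i) hge
      rw [setIntegral_const] at this
      simpa [nu, lvol, mul_comm, ← measureReal_def] using this
    have h2 : nu f₁ (P.F j) < f₁ c * lvol (P.F j) := by
      have hpos : 0 < ∫ t in P.F j, (f₁ c - f₁ t) := by
        refine setInt_pos (hmeas j) ((hintc j (f₁ c)).sub (hint1 j)) ?_ ?_
        · intro t ht
          have := hf1anti.antitoneOn hcmem (hsub j ht) (hcle t ht)
          linarith
        · rw [show {t | t ∈ P.F j ∧ 0 < f₁ c - f₁ t} =
            P.F j ∩ {t | 0 < f₁ c - f₁ t} from rfl]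
          have hss : P.F j \ {c} ⊆ P.F j ∩ {t | 0 < f₁ c - f₁ t} := by
            rintro t ⟨ht, htc⟩
            refine ⟨ht, ?_⟩
            have hct : c < t := lt_of_le_of_ne (hcle t ht) (Ne.symm htc)
            have := hf1anti hcmem (hsub j ht) hct
            show (0:ℝ) < f₁ c - f₁ t
            linarith
          calc (0:ℝ≥0∞) < volume (P.F j) := P.posMeas j
            _ = volume (P.F j \ {c}) := (measure_diff_null (Real.volume_singleton)).symm
            _ ≤ _ := measure_mono hss
      have hsplit := integral_sub (hintc j (f₁ c)) (hint1 j)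
      rw [hsplit, setIntegral_const] at hpos
      have : (volume (P.F j)).toReal • f₁ c = f₁ c * lvol (P.F j) := by
        simp [lvol, mul_comm]
      rw [measureReal_def, this] at hpos
      simp only [nu]
      linarith
    calc nu f₁ (P.F j) / lvol (P.F j) < f₁ c := (div_lt_iff₀ (hl j)).2 h2
      _ ≤ nu f₁ (P.F i) / lvol (P.F i) := (le_div_iff₀ (hl i)).2 h1
  -- average monotonicity for f₂ (strictly increasing averages)
  have havg2 : ∀ i j : Fin k, i < j →
      nu f₂ (P.F i) / lvol (P.F i) < nu f₂ (P.F j) / lvol (P.F j) := by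
    intro i j hij
    obtain ⟨t0, ht0⟩ := hne j
    set c : ℝ := sInf (P.F j) with hc
    have hbdd : BddBelow (P.F j) := ⟨0, fun t ht => (hsub j ht).1⟩
    have hcmem : c ∈ Icc (0:ℝ) 1 :=
      ⟨le_csInf ⟨t0, ht0⟩ (fun t ht => (hsub j ht).1),
       le_trans (csInf_le hbdd ht0) (hsub j ht0).2⟩
    have hcge : ∀ s ∈ P.F i, s ≤ c := fun s hs =>
      le_csInf ⟨t0, ht0⟩ (fun t ht => (P.ordered i j hij s hs t ht).le)
    have h1 : f₂ c * lvol (P.F j) ≤ nu f₂ (P.F j) := by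
      have hge : ∀ t ∈ P.F j, f₂ c ≤ f₂ t := fun t ht =>
        hf2mono.monotoneOn hcmem (hsub j ht) (csInf_le hbdd ht)
      have := setIntegral_mono_on (hintc j (f₂ c)) (hint2 j) (hmeas j) hge
      rw [setIntegral_const] at this
      simpa [nu, lvol, mul_comm, ← measureReal_def] using this
    have h2 : nu f₂ (P.F i) < f₂ c * lvol (P.F i) := by
      have hpos : 0 < ∫ t in P.F i, (f₂ c - f₂ t) := by
        refine setInt_pos (hmeas i) ((hintc i (f₂ c)).sub (hint2 i)) ?_ ?_
        · intro t ht
          have := hf2mono.monotoneOn (hsub i ht) hcmem (hcge t ht)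
          linarith
        · have hss : P.F i \ {c} ⊆ {t | t ∈ P.F i ∧ 0 < f₂ c - f₂ t} := by
            rintro t ⟨ht, htc⟩
            refine ⟨ht, ?_⟩
            have hct : t < c := lt_of_le_of_ne (hcge t ht) htc
            have := hf2mono (hsub i ht) hcmem hct
            show 0 < f₂ c - f₂ t
            linarith
          calc (0:ℝ≥0∞) < volume (P.F i) := P.posMeas i
            _ = volume (P.F i \ {c}) := (measure_diff_null (Real.volume_singleton)).symm
            _ ≤ _ := measure_mono hss
      have hsplit := integral_sub (hintc i (f₂ c)) (hint2 i)
      rw [hsplit, setIntegral_const] at hpos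
      have : (volume (P.F i)).toReal • f₂ c = f₂ c * lvol (P.F i) := by
        simp [lvol, mul_comm]
      rw [measureReal_def, this] at hpos
      simp only [nu]
      linarith
    calc nu f₂ (P.F i) / lvol (P.F i) < f₂ c := (div_lt_iff₀ (hl i)).2 h2
      _ ≤ nu f₂ (P.F j) / lvol (P.F j) := (le_div_iff₀ (hl j)).2 h1
  -- key exclusion
  have hkey : ∀ i j : Fin k, i < j → 0 < y i → x j = 0 := by
    intro i j hij hyi
    by_contra hxj
    have hxj' : 0 < x j := (hx0 j).lt_of_ne (Ne.symm hxj)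
    have h1 := hratio f₁ x hx0 hbudx hmax1 i j (ne_of_lt hij) hxj'
    have h2 := hratio f₂ y hy0 hbudy hmax2 j i (ne_of_gt hij) hyi
    have hAij := havg1 i j hij
    have hBij := havg2 i j hij
    have hAi : 0 < nu f₁ (P.F i) / lvol (P.F i) := div_pos (hnu1 i) (hl i)
    have hBj : 0 < nu f₂ (P.F j) / lvol (P.F j) := div_pos (hnu2 j) (hl j)
    have hpi := hppos i
    have hpj := hppos j
    have hlt1 : p j < p i := by
      have h3 : nu f₁ (P.F i) / lvol (P.F i) * p j < nu f₁ (P.F i) / lvol (P.F i) * p i := by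
        calc nu f₁ (P.F i) / lvol (P.F i) * p j ≤ nu f₁ (P.F j) / lvol (P.F j) * p i := h1
          _ < nu f₁ (P.F i) / lvol (P.F i) * p i := by nlinarith
      exact lt_of_mul_lt_mul_left h3 hAi.le
    have hlt2 : p i < p j := by
      have h3 : nu f₂ (P.F j) / lvol (P.F j) * p i < nu f₂ (P.F j) / lvol (P.F j) * p j := by
        calc nu f₂ (P.F j) / lvol (P.F j) * p i ≤ nu f₂ (P.F i) / lvol (P.F i) * p j := h2
          _ < nu f₂ (P.F j) / lvol (P.F j) * p j := by nlinarith
      exact lt_of_mul_lt_mul_left h3 hBj.le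
    linarith
  -- conclusion
  refine ⟨hclear, ?_⟩
  by_cases hY : ∃ i, 0 < y i
  · obtain ⟨i0, hi0⟩ := hY
    set S : Finset (Fin k) := Finset.univ.filter (fun i => 0 < y i) with hS
    have hSne : S.Nonempty := ⟨i0, by simp [hS, hi0]⟩
    refine ⟨S.min' hSne, ?_, ?_⟩
    · intro i hi
      have hiS : i ∉ S := fun h => absurd (S.min'_le i h) (not_le.2 hi)
      have hyi : y i = 0 := by
        by_contra h
        exact hiS (by simp [hS, (hy0 i).lt_of_ne (Ne.symm h)])
      exact ⟨by have := hclear i; linarith, hyi⟩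
    · intro j hj
      have hmin : 0 < y (S.min' hSne) := by
        have := S.min'_mem hSne
        simp only [hS, Finset.mem_filter] at this
        exact this.2
      have hxj := hkey _ j hj hmin
      exact ⟨by have := hclear j; linarith, hxj⟩
  · push_neg at hY
    refine ⟨⟨k - 1, Nat.sub_lt hk one_pos⟩, ?_, ?_⟩
    · intro i _
      have hyi : y i = 0 := le_antisymm (hY i) (hy0 i)
      exact ⟨by have := hclear i; linarith, hyi⟩
    · intro j hj
      exfalso
      have h1 : k - 1 < (j : ℕ) := hj
      have h2 := j.isLt
      omega


end
end

section
/- In the two-agent opposed-preferences economy with classification π = {C₁,…,C_k} (intervals listed from left to right), let ⟨p,(x,y)⟩ be a competitive equilibrium and let j* be an index such that x_{C_i} = λ(C_i) for all i < j* and x_{C_j} = 0 for all j > j*, with y_{C_j} = λ(C_j) − x_{C_j} for all j. Write C* = C_{j*}, C_ℓ = ∪_{i<j*} C_i, and C_r = ∪_{j>j*} C_j. If x_{C*} > 0 and y_{C*} > 0, then x_{C*} = ξ·λ(C*), where ξ = (1/2)·[ ν₂(C_r)/ν₂(C*) − ν₁(C_ℓ)/ν₁(C*) + 1 ]. -/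
open MeasureTheory Set
open scoped ENNReal

noncomputable section

section Helpers

variable {k : ℕ} (P : OrderedClassification k)

lemma OC.subset_Icc (j : Fin k) : P.F j ⊆ Set.Icc (0:ℝ) 1 := by
  rw [← P.cover]; exact Set.subset_iUnion P.F j

lemma OC.meas (j : Fin k) : MeasurableSet (P.F j) :=
  (P.isInterval j).measurableSet

lemma OC.vol_lt_top (j : Fin k) : volume (P.F j) < ⊤ :=
  lt_of_le_of_lt (measure_mono (OC.subset_Icc P j))
    (by simp [Real.volume_Icc])

lemma OC.lvol_pos (j : Fin k) : 0 < lvol (P.F j) :=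
  ENNReal.toReal_pos (P.posMeas j).ne' (OC.vol_lt_top P j).ne

lemma OC.disjoint {j j' : Fin k} (h : j ≠ j') : Disjoint (P.F j) (P.F j') := by
  rcases h.lt_or_gt with h | h
  · exact Set.disjoint_left.2 fun t ht ht' =>
      lt_irrefl t (P.ordered j j' h t ht t ht')
  · exact Set.disjoint_left.2 fun t ht ht' =>
      lt_irrefl t (P.ordered j' j h t ht' t ht)

lemma OC.integrableOn_of_anti {f : ℝ → ℝ} (hf : AntitoneOn f (Set.Icc 0 1))
    (j : Fin k) : IntegrableOn f (P.F j) volume :=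
  (AntitoneOn.integrableOn_isCompact isCompact_Icc hf).mono_set (OC.subset_Icc P j)

lemma OC.integrableOn_of_mono {f : ℝ → ℝ} (hf : MonotoneOn f (Set.Icc 0 1))
    (j : Fin k) : IntegrableOn f (P.F j) volume :=
  (hf.integrableOn_isCompact isCompact_Icc).mono_set (OC.subset_Icc P j)

lemma OC.nu_pos {f : ℝ → ℝ} (hf : ∀ t ∈ Set.Icc (0:ℝ) 1, 0 < f t)
    (hfi : IntegrableOn f (P.F j) volume) (j : Fin k)
    (hfi' : IntegrableOn f (P.F j) volume) : 0 < nu f (P.F j) := by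
  rw [nu, setIntegral_pos_iff_support_of_nonneg_ae _ hfi']
  · have hsub : P.F j ⊆ Function.support f ∩ P.F j := fun t ht =>
      ⟨fun h0 => (hf t (OC.subset_Icc P j ht)).ne' h0, ht⟩
    exact lt_of_lt_of_le (P.posMeas j) (measure_mono hsub)
  · exact (ae_restrict_iff' (OC.meas P j)).2 <| Filter.Eventually.of_forall
      fun t ht => (hf t (OC.subset_Icc P j ht)).le

/-- Splitting a sum over `Fin k` at an index. -/
lemma sum_split {k : ℕ} (jstar : Fin k) (f : Fin k → ℝ) :
    ∑ m, f m = (∑ m ∈ Finset.univ.filter (· < jstar), f m) + f jstar +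
      ∑ m ∈ Finset.univ.filter (jstar < ·), f m := by
  have hsplit := Finset.sum_filter_add_sum_filter_not Finset.univ (· < jstar) f
  have hkey : Finset.univ.filter (fun m => ¬ m < jstar) =
      insert jstar (Finset.univ.filter (jstar < ·)) := by
    ext m
    simp only [Finset.mem_filter, Finset.mem_univ, true_and, Finset.mem_insert,
      not_lt]
    constructor
    · intro h
      rcases eq_or_lt_of_le h with h | h
      · exact Or.inl h.symm
      · exact Or.inr h
    · rintro (rfl | h)
      · exact le_rfl
      · exact h.le
  rw [← hsplit, hkey, Finset.sum_insert (by simp)]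
  ring

lemma Vlin_perturb {k : ℕ} (P : OrderedClassification k) (f : ℝ → ℝ)
    (z : Fin k → ℝ) (j : Fin k) (c : ℝ) :
    Vlin P f (fun m => z m + if m = j then c else 0) =
      Vlin P f z + c / lvol (P.F j) * nu f (P.F j) := by
  simp only [Vlin, add_div, add_mul, Finset.sum_add_distrib]
  congr 1
  rw [Finset.sum_eq_single j]
  · simp
  · intro b _ hb; simp [hb]
  · simp

lemma price_perturb {k : ℕ} (p z : Fin k → ℝ) (j : Fin k) (c : ℝ) :
    ∑ m, p m * (z m + if m = j then c else 0) = (∑ m, p m * z m) + p j * c := by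
  simp only [mul_add, Finset.sum_add_distrib]
  congr 1
  rw [Finset.sum_eq_single j]
  · simp
  · intro b _ hb; simp [hb]
  · simp

end Helpers

/-- the share of the disputed commodity.  If in equilibrium agent 1 gets
all commodities left of `j*` and none right of `j*`, and both agents consume a positive
amount of the disputed commodity `C* = C_{j*}`, then
`x_{C*} = ξ·λ(C*)` with `ξ = (1/2)(ν₂(C_r)/ν₂(C*) − ν₁(C_ℓ)/ν₁(C*) + 1)`. -/
theorem disputed_commodity_share (k : ℕ) (P : OrderedClassification k)
    (f₁ f₂ : ℝ → ℝ) (hopp : OpposedPreferences f₁ f₂)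
    (p x y : Fin k → ℝ) (heq : IsEqm2 P f₁ f₂ p x y)
    (jstar : Fin k)
    (hleft : ∀ i, i < jstar → x i = lvol (P.F i))
    (hright : ∀ j, jstar < j → x j = 0)
    (hy : ∀ j, y j = lvol (P.F j) - x j)
    (hx : 0 < x jstar) (hy' : 0 < y jstar) :
    x jstar =
      (1/2) * (nu f₂ (⋃ j : Fin k, ⋃ (_ : jstar < j), P.F j) / nu f₂ (P.F jstar) -
        nu f₁ (⋃ i : Fin k, ⋃ (_ : i < jstar), P.F i) / nu f₁ (P.F jstar) + 1) *
        lvol (P.F jstar) := by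
  obtain ⟨hf₁anti, hf₂mono, hf₁pos, hf₂pos⟩ := hopp
  obtain ⟨hp0, hx0, hy0, hxy, hbx, hby, hmax1, hmax2⟩ := heq
  have hlpos : ∀ j, 0 < lvol (P.F j) := fun j => OC.lvol_pos P j
  have hi1 : ∀ j, IntegrableOn f₁ (P.F j) volume :=
    OC.integrableOn_of_anti P hf₁anti.antitoneOn
  have hi2 : ∀ j, IntegrableOn f₂ (P.F j) volume :=
    OC.integrableOn_of_mono P hf₂mono.monotoneOn
  have hApos : ∀ j, 0 < nu f₁ (P.F j) :=
    fun j => OC.nu_pos P hf₁pos (hi1 j) j (hi1 j)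
  have hBpos : ∀ j, 0 < nu f₂ (P.F j) :=
    fun j => OC.nu_pos P hf₂pos (hi2 j) j (hi2 j)
  set T := ∑ j, p j * lvol (P.F j) with hTdef
  -- budget of agent 1 binds
  have hsumy : ∑ j, p j * y j = T - ∑ j, p j * x j := by
    rw [hTdef, ← Finset.sum_sub_distrib]
    exact Finset.sum_congr rfl fun j _ => by rw [hy j]; ring
  have hbudget : ∑ j, p j * x j = (1/2) * T := by
    rw [hsumy] at hby; linarith
  -- all prices are positive
  have hppos : ∀ j, 0 < p j := by
    intro j
    rcases lt_or_eq_of_le (hp0 j) with h | h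
    · exact h
    exfalso
    have hz0 : ∀ m, 0 ≤ (fun m => y m + if m = j then 1 else 0) m := by
      intro m; by_cases hm : m = j <;> simp [hm] <;> [linarith [hy0 j]; exact hy0 m]
    have hV : Vlin P f₂ y < Vlin P f₂ (fun m => y m + if m = j then 1 else 0) := by
      rw [Vlin_perturb]
      have : 0 < 1 / lvol (P.F j) * nu f₂ (P.F j) :=
        mul_pos (one_div_pos.mpr (hlpos j)) (hBpos j)
      linarith
    have hcost := hmax2 _ hz0 hV
    rw [price_perturb] at hcost
    rw [← h] at hcost
    simp only [zero_mul, add_zero] at hcost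
    linarith
  -- first-order conditions, agent 1
  have foc1 : ∀ m j : Fin k, 0 < x m →
      nu f₁ (P.F j) * lvol (P.F m) * p m ≤ nu f₁ (P.F m) * lvol (P.F j) * p j := by
    intro m j hm
    by_contra hcon
    push_neg at hcon
    have hjm : j ≠ m := by rintro rfl; exact lt_irrefl _ hcon
    set δ := x m with hδdef
    set ε := δ * p m / p j with hεdef
    have hε : 0 ≤ ε := by
      rw [hεdef]
      exact div_nonneg (mul_nonneg hm.le (hp0 m)) (hppos j).le
    have hεpj : ε * p j = δ * p m := by
      rw [hεdef]
      exact div_mul_cancel₀ _ (hppos j).ne'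
    set z : Fin k → ℝ :=
      fun t => (x t + if t = m then -δ else 0) + if t = j then ε else 0 with hzdef
    have hz0 : ∀ t, 0 ≤ z t := by
      intro t
      by_cases h1 : t = m
      · subst h1
        have ht : t ≠ j := fun h => hjm h.symm
        simp [hzdef, ht]
        exact le_rfl
      · by_cases h2 : t = j
        · subst h2
          simp [hzdef, h1]
          linarith [hx0 t]
        · simp [hzdef, h1, h2]
          exact hx0 t
    have hV : Vlin P f₁ x < Vlin P f₁ z := by
      rw [hzdef, Vlin_perturb P f₁ (fun t => x t + if t = m then -δ else 0) j ε,
        Vlin_perturb P f₁ x m (-δ)]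
      have key : δ / lvol (P.F m) * nu f₁ (P.F m) < ε / lvol (P.F j) * nu f₁ (P.F j) := by
        rw [div_mul_eq_mul_div, div_mul_eq_mul_div,
          div_lt_div_iff₀ (hlpos m) (hlpos j)]
        have h2 : (δ * nu f₁ (P.F m)) * lvol (P.F j) * p j <
            (ε * nu f₁ (P.F j)) * lvol (P.F m) * p j := by
          have h3 : (ε * nu f₁ (P.F j)) * lvol (P.F m) * p j =
              δ * (nu f₁ (P.F j) * lvol (P.F m) * p m) := by
            linear_combination (nu f₁ (P.F j) * lvol (P.F m)) * hεpj
          have h4 := mul_lt_mul_of_pos_left hcon hm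
          linarith
        have := lt_of_mul_lt_mul_right h2 (hppos j).le
        linarith
      have : -δ / lvol (P.F m) * nu f₁ (P.F m) = -(δ / lvol (P.F m) * nu f₁ (P.F m)) := by
        ring
      rw [this]
      linarith
    have hcost := hmax1 z hz0 hV
    rw [hzdef, price_perturb p (fun t => x t + if t = m then -δ else 0) j ε,
      price_perturb p x m (-δ)] at hcost
    nlinarith [hcost, hεpj, hbudget]
  -- first-order conditions, agent 2
  have foc2 : ∀ m j : Fin k, 0 < y m →
      nu f₂ (P.F j) * lvol (P.F m) * p m ≤ nu f₂ (P.F m) * lvol (P.F j) * p j := by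
    intro m j hm
    by_contra hcon
    push_neg at hcon
    have hjm : j ≠ m := by rintro rfl; exact lt_irrefl _ hcon
    set δ := y m with hδdef
    set ε := δ * p m / p j with hεdef
    have hε : 0 ≤ ε := by
      rw [hεdef]
      exact div_nonneg (mul_nonneg hm.le (hp0 m)) (hppos j).le
    have hεpj : ε * p j = δ * p m := by
      rw [hεdef]
      exact div_mul_cancel₀ _ (hppos j).ne'
    set z : Fin k → ℝ :=
      fun t => (y t + if t = m then -δ else 0) + if t = j then ε else 0 with hzdef
    have hz0 : ∀ t, 0 ≤ z t := by
      intro t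
      by_cases h1 : t = m
      · subst h1
        have ht : t ≠ j := fun h => hjm h.symm
        simp [hzdef, ht]
        exact le_rfl
      · by_cases h2 : t = j
        · subst h2
          simp [hzdef, h1]
          linarith [hy0 t]
        · simp [hzdef, h1, h2]
          exact hy0 t
    have hV : Vlin P f₂ y < Vlin P f₂ z := by
      rw [hzdef, Vlin_perturb P f₂ (fun t => y t + if t = m then -δ else 0) j ε,
        Vlin_perturb P f₂ y m (-δ)]
      have key : δ / lvol (P.F m) * nu f₂ (P.F m) < ε / lvol (P.F j) * nu f₂ (P.F j) := by
        rw [div_mul_eq_mul_div, div_mul_eq_mul_div,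
          div_lt_div_iff₀ (hlpos m) (hlpos j)]
        have h2 : (δ * nu f₂ (P.F m)) * lvol (P.F j) * p j <
            (ε * nu f₂ (P.F j)) * lvol (P.F m) * p j := by
          have h3 : (ε * nu f₂ (P.F j)) * lvol (P.F m) * p j =
              δ * (nu f₂ (P.F j) * lvol (P.F m) * p m) := by
            linear_combination (nu f₂ (P.F j) * lvol (P.F m)) * hεpj
          have h4 := mul_lt_mul_of_pos_left hcon hm
          linarith
        have := lt_of_mul_lt_mul_right h2 (hppos j).le
        linarith
      have : -δ / lvol (P.F m) * nu f₂ (P.F m) = -(δ / lvol (P.F m) * nu f₂ (P.F m)) := by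
        ring
      rw [this]
      linarith
    have hcost := hmax2 z hz0 hV
    rw [hzdef, price_perturb p (fun t => y t + if t = m then -δ else 0) j ε,
      price_perturb p y m (-δ)] at hcost
    have hsy : ∑ j, p j * y j = (1/2) * T := by rw [hsumy, hbudget]; ring
    nlinarith [hcost, hεpj, hsy]
  -- price equalities
  have hPL : ∀ i, i < jstar → p i * lvol (P.F i) * nu f₁ (P.F jstar) =
      p jstar * lvol (P.F jstar) * nu f₁ (P.F i) := by
    intro i hi
    have hxi : 0 < x i := by rw [hleft i hi]; exact hlpos i
    have h1 := foc1 i jstar hxi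
    have h2 := foc1 jstar i hx
    have h3 := le_antisymm h1 h2
    linear_combination h3
  have hPR : ∀ j, jstar < j → p j * lvol (P.F j) * nu f₂ (P.F jstar) =
      p jstar * lvol (P.F jstar) * nu f₂ (P.F j) := by
    intro j hj
    have hyj : 0 < y j := by
      rw [hy j, hright j hj, sub_zero]; exact hlpos j
    have h1 := foc2 j jstar hyj
    have h2 := foc2 jstar j hy'
    have h3 := le_antisymm h1 h2
    linear_combination h3
  -- sums over the left and right blocks
  have hxsum : ∑ m, p m * x m =
      (∑ m ∈ Finset.univ.filter (· < jstar), p m * lvol (P.F m)) + p jstar * x jstar := by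
    rw [sum_split jstar (fun m => p m * x m)]
    have hR : ∑ m ∈ Finset.univ.filter (jstar < ·), p m * x m = 0 :=
      Finset.sum_eq_zero fun m hm => by
        rw [hright m (by simpa using hm), mul_zero]
    have hL : ∑ m ∈ Finset.univ.filter (· < jstar), p m * x m =
        ∑ m ∈ Finset.univ.filter (· < jstar), p m * lvol (P.F m) :=
      Finset.sum_congr rfl fun m hm => by rw [hleft m (by simpa using hm)]
    rw [hR, hL, add_zero]
  have hTsplit : T = (∑ m ∈ Finset.univ.filter (· < jstar), p m * lvol (P.F m)) +
      p jstar * lvol (P.F jstar) +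
      ∑ m ∈ Finset.univ.filter (jstar < ·), p m * lvol (P.F m) :=
    sum_split jstar _
  set SL := ∑ m ∈ Finset.univ.filter (· < jstar), p m * lvol (P.F m) with hSLdef
  set SR := ∑ m ∈ Finset.univ.filter (jstar < ·), p m * lvol (P.F m) with hSRdef
  set NL := ∑ m ∈ Finset.univ.filter (· < jstar), nu f₁ (P.F m) with hNLdef
  set NR := ∑ m ∈ Finset.univ.filter (jstar < ·), nu f₂ (P.F m) with hNRdef
  have hSL : SL * nu f₁ (P.F jstar) = p jstar * lvol (P.F jstar) * NL := by
    rw [hSLdef, hNLdef, Finset.sum_mul, Finset.mul_sum]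
    exact Finset.sum_congr rfl fun i hi => hPL i (by simpa using hi)
  have hSR : SR * nu f₂ (P.F jstar) = p jstar * lvol (P.F jstar) * NR := by
    rw [hSRdef, hNRdef, Finset.sum_mul, Finset.mul_sum]
    exact Finset.sum_congr rfl fun i hi => hPR i (by simpa using hi)
  -- identify the unions with the block sums
  have hNLnu : nu f₁ (⋃ i : Fin k, ⋃ (_ : i < jstar), P.F i) = NL := by
    have hset : (⋃ i : Fin k, ⋃ (_ : i < jstar), P.F i) =
        ⋃ i ∈ Finset.univ.filter (· < jstar), P.F i := by
      ext t; simp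
    rw [nu, hset, integral_biUnion_finset _ (fun i _ => OC.meas P i)
      (fun i _ j _ hij => OC.disjoint P hij) (fun i _ => hi1 i)]
    rw [hNLdef]
    exact Finset.sum_congr rfl fun i _ => rfl
  have hNRnu : nu f₂ (⋃ j : Fin k, ⋃ (_ : jstar < j), P.F j) = NR := by
    have hset : (⋃ j : Fin k, ⋃ (_ : jstar < j), P.F j) =
        ⋃ j ∈ Finset.univ.filter (jstar < ·), P.F j := by
      ext t; simp
    rw [nu, hset, integral_biUnion_finset _ (fun i _ => OC.meas P i)
      (fun i _ j _ hij => OC.disjoint P hij) (fun i _ => hi2 i)]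
    rw [hNRdef]
    exact Finset.sum_congr rfl fun i _ => rfl
  rw [hNLnu, hNRnu]
  -- final algebra
  have hSL' : SL = p jstar * lvol (P.F jstar) * NL / nu f₁ (P.F jstar) := by
    rw [eq_div_iff (hApos jstar).ne']; exact hSL
  have hSR' : SR = p jstar * lvol (P.F jstar) * NR / nu f₂ (P.F jstar) := by
    rw [eq_div_iff (hBpos jstar).ne']; exact hSR
  have hkey : 2 * (p jstar * x jstar) = SR - SL + p jstar * lvol (P.F jstar) := by
    rw [hxsum, hTsplit] at hbudget
    linarith
  have hgoal : p jstar * x jstar = p jstar *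
      ((1/2) * (NR / nu f₂ (P.F jstar) - NL / nu f₁ (P.F jstar) + 1) * lvol (P.F jstar)) := by
    rw [hSR', hSL'] at hkey
    have hring : p jstar *
        ((1/2) * (NR / nu f₂ (P.F jstar) - NL / nu f₁ (P.F jstar) + 1) * lvol (P.F jstar)) =
        (1/2) * (p jstar * lvol (P.F jstar) * NR / nu f₂ (P.F jstar) -
          p jstar * lvol (P.F jstar) * NL / nu f₁ (P.F jstar) +
          p jstar * lvol (P.F jstar)) := by
      ring
    rw [hring]
    linarith
  exact mul_left_cancel₀ (hppos jstar).ne' hgoal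

end
end
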